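/- (Clifford-algebra curvature trace identity, used in the proof of Lemma 3.2.) Let n ≥ 2, let V = EuclideanSpace ℝ (Fin n), let Q be the quadratic form Q(x) = −‖x‖² on V, let Cl denote the Clifford algebra of (V, Q) with canonical embedding ι : V → Cl, and write e_i := ι(standard basis vector i). Let r : Fin n → Fin n → Fin n → Fin n → ℝ be an algebraic curvature tensor in coordinates: r i j k l = −r j i k l = −r i j l k, r i j k l = r k l i j, and r i j k l + r j k i l + r k i j l = 0. Then, in Cl: Σ_{i<j} Σ_{k<l} (r i j k l) • (e_i · e_j · e_k · e_l) = (Σ_{i<j} r i j j i) • 1. -/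

import Mathlib

open Finset

/-- The quadratic form `x ↦ -‖x‖²` on `EuclideanSpace ℝ (Fin n)`. -/
noncomputable def negNormSqForm (n : ℕ) : QuadraticForm ℝ (EuclideanSpace ℝ (Fin n)) :=
  -(LinearMap.BilinMap.toQuadraticMap (innerₗ (EuclideanSpace ℝ (Fin n))))

/-- The image `e_i` of the `i`-th standard basis vector in the Clifford algebra of
`(EuclideanSpace ℝ (Fin n), -‖·‖²)`. -/
noncomputable def cliffordGen (n : ℕ) (i : Fin n) :
    CliffordAlgebra (negNormSqForm n) :=
  CliffordAlgebra.ι (negNormSqForm n) (EuclideanSpace.single i 1)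

namespace CliffordTraceAux
variable {n : ℕ} {M : Type*}

local notation "e" => cliffordGen n

/-- Kronecker delta. -/
def δ (i j : Fin n) : ℝ := if i = j then 1 else 0

lemma δ_comm (i j : Fin n) : δ i j = δ j i := by simp [δ, eq_comm]

lemma gen_anticomm (i j : Fin n) :
    e i * e j + e j * e i = (-(2:ℝ) * δ i j) • 1 := by
  rw [cliffordGen, cliffordGen, CliffordAlgebra.ι_mul_ι_add_swap]
  have : QuadraticMap.polar (⇑(negNormSqForm n)) (EuclideanSpace.single i 1)
      (EuclideanSpace.single j 1) = -(2:ℝ) * δ i j := by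
    simp only [negNormSqForm, QuadraticMap.polar, QuadraticMap.neg_apply,
      LinearMap.BilinMap.toQuadraticMap_apply, innerₗ_apply_apply,
      inner_add_add_self, δ]
    simp only [EuclideanSpace.inner_single_left, EuclideanSpace.single_apply, map_one, one_mul]
    split_ifs with h1 h2 h3 <;> simp_all <;> ring
  rw [this, Algebra.algebraMap_eq_smul_one]

lemma gen_mul (i j : Fin n) : e i * e j = (-(2:ℝ) * δ i j) • 1 - e j * e i :=
  eq_sub_of_add_eq (gen_anticomm i j)

lemma gen_mul_ne {i j : Fin n} (h : i ≠ j) : e i * e j = -(e j * e i) := by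
  rw [gen_mul]; simp [δ, h]

lemma gen_sq (i : Fin n) : e i * e i = -1 := by
  have h := gen_anticomm i i
  have h2 : (2:ℝ) • (e i * e i) = (2:ℝ) • (-1 : CliffordAlgebra (negNormSqForm n)) := by
    rw [two_smul]
    rw [h]
    simp [δ]
  exact smul_right_injective _ (by norm_num) h2

lemma P1 (a b c d : Fin n) :
    e c * e a * e b * e d =
      e a * e b * e c * e d + ((2:ℝ) * δ c b) • (e a * e d) - ((2:ℝ) * δ c a) • (e b * e d) := by
  rw [show e c * e a * e b = (e c * e a) * e b from rfl, gen_mul c a, sub_mul, sub_mul,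
    mul_assoc (e a) (e c) (e b), gen_mul c b]
  simp only [smul_mul_assoc, one_mul, mul_sub, sub_mul, mul_smul_comm, mul_one, mul_assoc]
  module

lemma P2 (a b c d : Fin n) :
    e b * e c * e a * e d =
      e a * e b * e c * e d + ((2:ℝ) * δ a b) • (e c * e d) - ((2:ℝ) * δ c a) • (e b * e d) := by
  rw [mul_assoc (e b) (e c) (e a), gen_mul c a, mul_sub, sub_mul,
    ← mul_assoc (e b) (e a) (e c), gen_mul b a, sub_mul, sub_mul]
  simp only [smul_mul_assoc, one_mul, mul_sub, sub_mul, mul_smul_comm, mul_one, mul_assoc,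
    δ_comm b a]
  module

section Sums
variable [AddCommMonoid M]

lemma sum_Ioi_comm (g : Fin n → Fin n → M) :
    ∑ i, ∑ j ∈ Ioi i, g i j = ∑ j, ∑ i ∈ Iio j, g i j := by
  rw [Finset.sum_sigma', Finset.sum_sigma']
  refine Finset.sum_nbij' (fun p => ⟨p.2, p.1⟩) (fun p => ⟨p.2, p.1⟩) ?_ ?_ ?_ ?_ ?_ <;> simp

lemma sum_pair_split (f : Fin n → Fin n → M) :
    ∑ i, ∑ j, f i j = (∑ i, f i i) + ∑ i, ∑ j ∈ Ioi i, (f i j + f j i) := by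
  have h1 : ∀ i : Fin n, ∑ j, f i j = f i i + (∑ j ∈ Ioi i, f i j + ∑ j ∈ Iio i, f i j) := by
    intro i
    have hd : Disjoint (Ioi i) (Iio i) := by
      simp only [Finset.disjoint_left, mem_Ioi, mem_Iio]
      intro a h1 h2; exact absurd (h1.trans h2) (lt_irrefl i)
    rw [← Finset.sum_erase_add _ _ (mem_univ i), ← Finset.sum_disjUnion hd, add_comm]
    congr 1
    apply Finset.sum_congr _ (fun _ _ => rfl)
    ext x
    simp only [Finset.mem_disjUnion, mem_Ioi, mem_Iio, Finset.mem_erase, mem_univ,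
      and_true, Fin.lt_def, ne_eq, Fin.ext_iff]
    omega
  simp_rw [h1, Finset.sum_add_distrib]
  rw [← sum_Ioi_comm (fun i j => f j i)]

lemma sum3_comm (h : Fin n → Fin n → Fin n → M) :
    ∑ i, ∑ j, ∑ k, h i j k = ∑ i, ∑ j, ∑ k, h k i j :=
  calc ∑ i, ∑ j, ∑ k, h i j k = ∑ j, ∑ i, ∑ k, h i j k := Finset.sum_comm
    _ = ∑ j, ∑ k, ∑ i, h i j k := Finset.sum_congr rfl fun _ _ => Finset.sum_comm

lemma sum3_comm' (h : Fin n → Fin n → Fin n → M) :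
    ∑ i, ∑ j, ∑ k, h i j k = ∑ i, ∑ j, ∑ k, h j k i :=
  (sum3_comm h).trans (sum3_comm fun a b c => h c a b)

lemma sum_pair_half [Module ℝ M] (f : Fin n → Fin n → M)
    (hsym : ∀ i j, f i j = f j i) (hdiag : ∀ i, f i i = 0) :
    ∑ i, ∑ j, f i j = (2:ℝ) • ∑ i, ∑ j ∈ Ioi i, f i j := by
  rw [sum_pair_split]
  simp only [hdiag, Finset.sum_const_zero, zero_add]
  rw [Finset.smul_sum]
  refine Finset.sum_congr rfl fun i _ => ?_
  rw [Finset.smul_sum]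
  refine Finset.sum_congr rfl fun j _ => ?_
  rw [hsym j i, ← two_smul ℝ]

end Sums

lemma sum_pair_diag [AddCommGroup M] (f : Fin n → Fin n → M)
    (hanti : ∀ i j, i ≠ j → f i j = -f j i) :
    ∑ i, ∑ j, f i j = ∑ i, f i i := by
  rw [sum_pair_split]
  have h2 : ∑ i, ∑ j ∈ Ioi i, (f i j + f j i) = 0 :=
    Finset.sum_eq_zero fun i _ => Finset.sum_eq_zero fun j hj => by
      rw [hanti i j (mem_Ioi.mp hj).ne]; abel
  rw [h2, add_zero]

end CliffordTraceAux

open CliffordTraceAux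

set_option maxHeartbeats 1000000 in
/-- **Clifford-algebra curvature trace identity** (used in the proof of Lemma 3.2 of
the paper).  For an algebraic curvature tensor `r` in coordinates,
`∑_{i<j} ∑_{k<l} r i j k l • (e_i e_j e_k e_l) = (∑_{i<j} r i j j i) • 1`
in the Clifford algebra of `(ℝⁿ, -‖·‖²)`; i.e. `∑ α_i ∘ R(α_i) = -(1/4)·tr R`. -/
theorem clifford_curvature_trace
    {n : ℕ} (hn : 2 ≤ n)
    (r : Fin n → Fin n → Fin n → Fin n → ℝ)
    (hr1 : ∀ i j k l, r i j k l = -r j i k l)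
    (hr2 : ∀ i j k l, r i j k l = -r i j l k)
    (hr3 : ∀ i j k l, r i j k l = r k l i j)
    (hrb : ∀ i j k l, r i j k l + r j k i l + r k i j l = 0) :
    ∑ i, ∑ j ∈ Ioi i, ∑ k, ∑ l ∈ Ioi k,
        (r i j k l) • (cliffordGen n i * cliffordGen n j * cliffordGen n k * cliffordGen n l) =
      (∑ i, ∑ j ∈ Ioi i, r i j j i) • (1 : CliffordAlgebra (negNormSqForm n)) := by
  classical
  have hrii : ∀ i k l, r i i k l = 0 := fun i k l => by have := hr1 i i k l; linarith
  have hrkk : ∀ i j k, r i j k k = 0 := fun i j k => by have := hr2 i j k k; linarith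
  -- pointwise swap symmetries
  have hswapL : ∀ i j k l, r j i k l • (cliffordGen n j * cliffordGen n i * cliffordGen n k * cliffordGen n l)
      = r i j k l • (cliffordGen n i * cliffordGen n j * cliffordGen n k * cliffordGen n l) := by
    intro i j k l
    rcases eq_or_ne i j with rfl | hij
    · rfl
    · have h1 : cliffordGen n j * cliffordGen n i * cliffordGen n k * cliffordGen n l = -(cliffordGen n i * cliffordGen n j * cliffordGen n k * cliffordGen n l) := by
        rw [gen_mul_ne (Ne.symm hij)]
        simp only [neg_mul]
      rw [h1, hr1 i j k l]
      simp only [smul_neg, neg_smul, neg_neg]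
  have hswapR : ∀ i j k l, r i j l k • (cliffordGen n i * cliffordGen n j * cliffordGen n l * cliffordGen n k)
      = r i j k l • (cliffordGen n i * cliffordGen n j * cliffordGen n k * cliffordGen n l) := by
    intro i j k l
    rcases eq_or_ne k l with rfl | hkl
    · rfl
    · have h1 : cliffordGen n i * cliffordGen n j * cliffordGen n l * cliffordGen n k = -(cliffordGen n i * cliffordGen n j * cliffordGen n k * cliffordGen n l) := by
        rw [mul_assoc (cliffordGen n i * cliffordGen n j) (cliffordGen n l) (cliffordGen n k), gen_mul_ne (Ne.symm hkl), mul_neg, mul_assoc]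
        simp [mul_assoc]
      rw [h1, hr2 i j k l]
      simp only [smul_neg, neg_smul, neg_neg]
  -- Step I : full quadruple sum is 4 • the goal LHS
  have stepA : ∑ i, ∑ j, ∑ k, ∑ l, r i j k l • (cliffordGen n i * cliffordGen n j * cliffordGen n k * cliffordGen n l)
      = (4:ℝ) • ∑ i, ∑ j ∈ Ioi i, ∑ k, ∑ l ∈ Ioi k,
          r i j k l • (cliffordGen n i * cliffordGen n j * cliffordGen n k * cliffordGen n l) := by
    calc ∑ i, ∑ j, ∑ k, ∑ l, r i j k l • (cliffordGen n i * cliffordGen n j * cliffordGen n k * cliffordGen n l)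
        = ∑ i, ∑ j, (2:ℝ) • ∑ k, ∑ l ∈ Ioi k, r i j k l • (cliffordGen n i * cliffordGen n j * cliffordGen n k * cliffordGen n l) := by
          refine Finset.sum_congr rfl fun i _ => Finset.sum_congr rfl fun j _ => ?_
          refine sum_pair_half _ (fun k l => (hswapR i j k l).symm) (fun k => ?_)
          rw [hrkk i j k, zero_smul]
      _ = (2:ℝ) • ∑ i, ∑ j, ∑ k, ∑ l ∈ Ioi k, r i j k l • (cliffordGen n i * cliffordGen n j * cliffordGen n k * cliffordGen n l) := by
          simp only [← Finset.smul_sum]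
      _ = (2:ℝ) • ((2:ℝ) • ∑ i, ∑ j ∈ Ioi i, ∑ k, ∑ l ∈ Ioi k,
            r i j k l • (cliffordGen n i * cliffordGen n j * cliffordGen n k * cliffordGen n l)) := by
          congr 1
          refine sum_pair_half _ (fun i j => ?_) (fun i => ?_)
          · exact (Finset.sum_congr rfl fun k _ => Finset.sum_congr rfl fun l _ =>
              (hswapL i j k l)).symm
          · exact Finset.sum_eq_zero fun k _ => Finset.sum_eq_zero fun l _ => by
              rw [hrii i k l, zero_smul]
      _ = (4:ℝ) • ∑ i, ∑ j ∈ Ioi i, ∑ k, ∑ l ∈ Ioi k,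
            r i j k l • (cliffordGen n i * cliffordGen n j * cliffordGen n k * cliffordGen n l) := by
          rw [smul_smul]; norm_num
  -- Step II : Bianchi
  have bianchi : ∑ i, ∑ j, ∑ k, ∑ l, r i j k l • (cliffordGen n i * cliffordGen n j * cliffordGen n k * cliffordGen n l)
      = -(∑ i, ∑ j, ∑ k, ∑ l, r i j k l • (cliffordGen n k * cliffordGen n i * cliffordGen n j * cliffordGen n l))
        - ∑ i, ∑ j, ∑ k, ∑ l, r i j k l • (cliffordGen n j * cliffordGen n k * cliffordGen n i * cliffordGen n l) := by
    have pt : ∀ i j k l, r i j k l • (cliffordGen n i * cliffordGen n j * cliffordGen n k * cliffordGen n l)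
        = -(r j k i l • (cliffordGen n i * cliffordGen n j * cliffordGen n k * cliffordGen n l)) - r k i j l • (cliffordGen n i * cliffordGen n j * cliffordGen n k * cliffordGen n l) := by
      intro i j k l
      rw [show r i j k l = -r j k i l - r k i j l by have := hrb i j k l; linarith,
        sub_smul, neg_smul]
    calc ∑ i, ∑ j, ∑ k, ∑ l, r i j k l • (cliffordGen n i * cliffordGen n j * cliffordGen n k * cliffordGen n l)
        = ∑ i, ∑ j, ∑ k, ∑ l, (-(r j k i l • (cliffordGen n i * cliffordGen n j * cliffordGen n k * cliffordGen n l))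
            - r k i j l • (cliffordGen n i * cliffordGen n j * cliffordGen n k * cliffordGen n l)) := by
          exact Finset.sum_congr rfl fun i _ => Finset.sum_congr rfl fun j _ =>
            Finset.sum_congr rfl fun k _ => Finset.sum_congr rfl fun l _ => pt i j k l
      _ = -(∑ i, ∑ j, ∑ k, ∑ l, r j k i l • (cliffordGen n i * cliffordGen n j * cliffordGen n k * cliffordGen n l))
            - ∑ i, ∑ j, ∑ k, ∑ l, r k i j l • (cliffordGen n i * cliffordGen n j * cliffordGen n k * cliffordGen n l) := by
          simp only [Finset.sum_sub_distrib, Finset.sum_neg_distrib]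
      _ = -(∑ i, ∑ j, ∑ k, ∑ l, r i j k l • (cliffordGen n k * cliffordGen n i * cliffordGen n j * cliffordGen n l))
            - ∑ i, ∑ j, ∑ k, ∑ l, r i j k l • (cliffordGen n j * cliffordGen n k * cliffordGen n i * cliffordGen n l) := by
          rw [sum3_comm (fun i j k => ∑ l, r j k i l • (cliffordGen n i * cliffordGen n j * cliffordGen n k * cliffordGen n l)),
            sum3_comm' (fun i j k => ∑ l, r k i j l • (cliffordGen n i * cliffordGen n j * cliffordGen n k * cliffordGen n l))]
  -- Step III : expansions via P1/P2
  have expand1 : ∑ i, ∑ j, ∑ k, ∑ l, r i j k l • (cliffordGen n k * cliffordGen n i * cliffordGen n j * cliffordGen n l)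
      = (∑ i, ∑ j, ∑ k, ∑ l, r i j k l • (cliffordGen n i * cliffordGen n j * cliffordGen n k * cliffordGen n l))
        + (∑ i, ∑ j, ∑ k, ∑ l, (r i j k l * ((2:ℝ) * δ k j)) • (cliffordGen n i * cliffordGen n l))
        - ∑ i, ∑ j, ∑ k, ∑ l, (r i j k l * ((2:ℝ) * δ k i)) • (cliffordGen n j * cliffordGen n l) := by
    calc ∑ i, ∑ j, ∑ k, ∑ l, r i j k l • (cliffordGen n k * cliffordGen n i * cliffordGen n j * cliffordGen n l)
        = ∑ i, ∑ j, ∑ k, ∑ l, (r i j k l • (cliffordGen n i * cliffordGen n j * cliffordGen n k * cliffordGen n l)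
            + (r i j k l * ((2:ℝ) * δ k j)) • (cliffordGen n i * cliffordGen n l)
            - (r i j k l * ((2:ℝ) * δ k i)) • (cliffordGen n j * cliffordGen n l)) := by
          refine Finset.sum_congr rfl fun i _ => Finset.sum_congr rfl fun j _ =>
            Finset.sum_congr rfl fun k _ => Finset.sum_congr rfl fun l _ => ?_
          rw [P1 i j k l, smul_sub, smul_add, smul_smul, smul_smul]
      _ = _ := by simp only [Finset.sum_add_distrib, Finset.sum_sub_distrib]
  have expand2 : ∑ i, ∑ j, ∑ k, ∑ l, r i j k l • (cliffordGen n j * cliffordGen n k * cliffordGen n i * cliffordGen n l)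
      = (∑ i, ∑ j, ∑ k, ∑ l, r i j k l • (cliffordGen n i * cliffordGen n j * cliffordGen n k * cliffordGen n l))
        + (∑ i, ∑ j, ∑ k, ∑ l, (r i j k l * ((2:ℝ) * δ i j)) • (cliffordGen n k * cliffordGen n l))
        - ∑ i, ∑ j, ∑ k, ∑ l, (r i j k l * ((2:ℝ) * δ k i)) • (cliffordGen n j * cliffordGen n l) := by
    calc ∑ i, ∑ j, ∑ k, ∑ l, r i j k l • (cliffordGen n j * cliffordGen n k * cliffordGen n i * cliffordGen n l)
        = ∑ i, ∑ j, ∑ k, ∑ l, (r i j k l • (cliffordGen n i * cliffordGen n j * cliffordGen n k * cliffordGen n l)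
            + (r i j k l * ((2:ℝ) * δ i j)) • (cliffordGen n k * cliffordGen n l)
            - (r i j k l * ((2:ℝ) * δ k i)) • (cliffordGen n j * cliffordGen n l)) := by
          refine Finset.sum_congr rfl fun i _ => Finset.sum_congr rfl fun j _ =>
            Finset.sum_congr rfl fun k _ => Finset.sum_congr rfl fun l _ => ?_
          rw [P2 i j k l, smul_sub, smul_add, smul_smul, smul_smul]
      _ = _ := by simp only [Finset.sum_add_distrib, Finset.sum_sub_distrib]
  -- the δ i j sum vanishes
  have hC : ∑ i, ∑ j, ∑ k, ∑ l, (r i j k l * ((2:ℝ) * δ i j)) • (cliffordGen n k * cliffordGen n l) = 0 := by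
    refine Finset.sum_eq_zero fun i _ => Finset.sum_eq_zero fun j _ =>
      Finset.sum_eq_zero fun k _ => Finset.sum_eq_zero fun l _ => ?_
    rcases eq_or_ne i j with rfl | hij
    · rw [hrii i k l]; simp
    · simp [δ, hij]
  -- collapse the delta sums
  have collapseA : ∑ i, ∑ j, ∑ k, ∑ l, (r i j k l * ((2:ℝ) * δ k j)) • (cliffordGen n i * cliffordGen n l)
      = ∑ i, ∑ j, ∑ l, (r i j j l * 2) • (cliffordGen n i * cliffordGen n l) := by
    refine Finset.sum_congr rfl fun i _ => Finset.sum_congr rfl fun j _ => ?_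
    rw [Finset.sum_comm]
    refine Finset.sum_congr rfl fun l _ => ?_
    simp only [δ, mul_ite, mul_one, mul_zero, ite_smul, zero_smul,
      Finset.sum_ite_eq', Finset.mem_univ, if_true]
  have collapseB : ∑ i, ∑ j, ∑ k, ∑ l, (r i j k l * ((2:ℝ) * δ k i)) • (cliffordGen n j * cliffordGen n l)
      = ∑ i, ∑ j, ∑ l, (r i j i l * 2) • (cliffordGen n j * cliffordGen n l) := by
    refine Finset.sum_congr rfl fun i _ => Finset.sum_congr rfl fun j _ => ?_
    rw [Finset.sum_comm]
    refine Finset.sum_congr rfl fun l _ => ?_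
    simp only [δ, mul_ite, mul_one, mul_zero, ite_smul, zero_smul,
      Finset.sum_ite_eq', Finset.mem_univ, if_true]
  -- A = -B
  have hA : ∑ i, ∑ j, ∑ l, (r i j j l * 2) • (cliffordGen n i * cliffordGen n l)
      = -∑ i, ∑ j, ∑ l, (r i j i l * 2) • (cliffordGen n j * cliffordGen n l) := by
    calc ∑ i, ∑ j, ∑ l, (r i j j l * 2) • (cliffordGen n i * cliffordGen n l)
        = ∑ j, ∑ i, ∑ l, (r i j j l * 2) • (cliffordGen n i * cliffordGen n l) := Finset.sum_comm
      _ = ∑ i, ∑ j, ∑ l, -((r i j i l * 2) • (cliffordGen n j * cliffordGen n l)) := by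
          refine Finset.sum_congr rfl fun i _ => Finset.sum_congr rfl fun j _ =>
            Finset.sum_congr rfl fun l _ => ?_
          rw [hr1 j i i l]
          simp only [neg_mul, neg_smul]
      _ = -∑ i, ∑ j, ∑ l, (r i j i l * 2) • (cliffordGen n j * cliffordGen n l) := by
          simp only [Finset.sum_neg_distrib]
  -- solve the linear equation: T4 = B
  have hT : ∑ i, ∑ j, ∑ k, ∑ l, r i j k l • (cliffordGen n i * cliffordGen n j * cliffordGen n k * cliffordGen n l)
      = ∑ i, ∑ j, ∑ l, (r i j i l * 2) • (cliffordGen n j * cliffordGen n l) := by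
    have h := bianchi
    rw [expand1, expand2, collapseA, collapseB, hC, hA] at h
    set x := ∑ i, ∑ j, ∑ k, ∑ l, r i j k l • (cliffordGen n i * cliffordGen n j * cliffordGen n k * cliffordGen n l) with hx
    set y := ∑ i, ∑ j, ∑ l, (r i j i l * 2) • (cliffordGen n j * cliffordGen n l) with hy
    have h3 : (3:ℝ) • x = (3:ℝ) • y := by linear_combination (norm := module) h
    exact smul_right_injective _ (by norm_num : (3:ℝ) ≠ 0) h3
  -- compute B
  have hB : ∑ i, ∑ j, ∑ l, (r i j i l * 2) • (cliffordGen n j * cliffordGen n l)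
      = (4:ℝ) • ((∑ i, ∑ j ∈ Ioi i, r i j j i) • (1 : CliffordAlgebra (negNormSqForm n))) := by
    calc ∑ i, ∑ j, ∑ l, (r i j i l * 2) • (cliffordGen n j * cliffordGen n l)
        = ∑ i, ∑ j, ∑ k, (r k i k j * 2) • (cliffordGen n i * cliffordGen n j) :=
          sum3_comm (fun i j l => (r i j i l * 2) • (cliffordGen n j * cliffordGen n l))
      _ = ∑ i, ∑ j, (∑ k, r k i k j * 2) • (cliffordGen n i * cliffordGen n j) := by
          refine Finset.sum_congr rfl fun i _ => Finset.sum_congr rfl fun j _ => ?_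
          rw [Finset.sum_smul]
      _ = ∑ i, (∑ k, r k i k i * 2) • (cliffordGen n i * cliffordGen n i) := by
          refine sum_pair_diag _ (fun a b hab => ?_)
          have h1 : cliffordGen n b * cliffordGen n a = -(cliffordGen n a * cliffordGen n b) := gen_mul_ne (Ne.symm hab)
          have h2 : ∑ k, r k b k a * 2 = ∑ k, r k a k b * 2 :=
            Finset.sum_congr rfl fun k _ => by rw [hr3 k b k a]
          rw [show (∑ k, r k a k b * 2) • (cliffordGen n a * cliffordGen n b)
              = -((∑ k, r k b k a * 2) • (cliffordGen n b * cliffordGen n a)) by rw [h1, h2, smul_neg, neg_neg]]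
      _ = ∑ i, (-(∑ k, r k i k i * 2)) • (1 : CliffordAlgebra (negNormSqForm n)) := by
          refine Finset.sum_congr rfl fun i _ => ?_
          rw [gen_sq, smul_neg, ← neg_smul]
      _ = (∑ i, -(∑ k, r k i k i * 2)) • (1 : CliffordAlgebra (negNormSqForm n)) := by
          rw [Finset.sum_smul]
      _ = (4:ℝ) • ((∑ i, ∑ j ∈ Ioi i, r i j j i) • (1 : CliffordAlgebra (negNormSqForm n))) := by
          rw [smul_smul]
          congr 1
          have e1 : ∑ i, -(∑ k, r k i k i * 2) = ∑ i, ∑ k, (r k i i k * 2) := by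
            refine Finset.sum_congr rfl fun i _ => ?_
            rw [← Finset.sum_neg_distrib]
            refine Finset.sum_congr rfl fun k _ => ?_
            rw [hr2 k i i k]; ring
          rw [e1]
          have e2 : ∑ i, ∑ k, (r k i i k * 2)
              = (2:ℝ) • ∑ i, ∑ k ∈ Ioi i, (r k i i k * 2) := by
            refine sum_pair_half _ (fun a b => ?_) (fun a => ?_)
            · rw [hr3 b a a b]
            · rw [hrii a a a]; ring
          rw [e2]
          have e3 : ∑ i, ∑ k ∈ Ioi i, (r k i i k * 2)
              = ∑ i, ∑ j ∈ Ioi i, r i j j i * 2 := by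
            refine Finset.sum_congr rfl fun i _ => Finset.sum_congr rfl fun j _ => ?_
            rw [hr3 j i i j]
          rw [e3, smul_eq_mul]
          simp only [← Finset.sum_mul]
          ring
  -- finish
  have final : (4:ℝ) • (∑ i, ∑ j ∈ Ioi i, ∑ k, ∑ l ∈ Ioi k,
        r i j k l • (cliffordGen n i * cliffordGen n j * cliffordGen n k * cliffordGen n l))
      = (4:ℝ) • ((∑ i, ∑ j ∈ Ioi i, r i j j i) • (1 : CliffordAlgebra (negNormSqForm n))) := by
    rw [← stepA, hT, hB]
  exact smul_right_injective _ (by norm_num : (4:ℝ) ≠ 0) final
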